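/- Let μ > 0 and λ ∈ ℝ with λ + μ > 0, and κ := (λ+3μ)/(λ+μ). For every k ∈ ℕ, the displacement field u(x) := r^{k/2} ψ_k(θ), defined on the slit plane ℝ² \ {(t,0) : t ≤ 0} via r := |x| and θ := arg(x₁ + i x₂) ∈ (−π, π), is smooth there and satisfies Navier's equation μΔu + (λ+μ)∇(∇·u) = 0 on the slit plane. -/

import Mathlib

/-- The angular function `ψ_k`. -/
noncomputable def psik (κ : ℝ) (k : ℕ) (θ : ℝ) : ℝ × ℝ :=
  (κ * Real.sin ((k : ℝ) * θ / 2) - ((k : ℝ) / 2) * Real.sin (((k : ℝ) / 2 - 2) * θ)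
      + ((k : ℝ) / 2 - (-1 : ℝ) ^ k) * Real.sin ((k : ℝ) * θ / 2),
   -(κ * Real.cos ((k : ℝ) * θ / 2)) - ((k : ℝ) / 2) * Real.cos (((k : ℝ) / 2 - 2) * θ)
      + ((k : ℝ) / 2 - (-1 : ℝ) ^ k) * Real.cos ((k : ℝ) * θ / 2))

/-- The slit plane `ℝ² \ {(t,0) : t ≤ 0}`. -/
def slitSet : Set (ℝ × ℝ) := {p : ℝ × ℝ | ¬(p.2 = 0 ∧ p.1 ≤ 0)}

/-- The displacement field `u(x) = r^{k/2} ψ_k(θ)` in polar coordinates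
`r = |x|`, `θ = arg(x₁ + i x₂) ∈ (−π, π)`. -/
noncomputable def upsi (κ : ℝ) (k : ℕ) (p : ℝ × ℝ) : ℝ × ℝ :=
  (Real.sqrt (p.1 ^ 2 + p.2 ^ 2) ^ ((k : ℝ) / 2))
    • psik κ k (Complex.arg ((p.1 : ℂ) + (p.2 : ℂ) * Complex.I))

/-- Partial derivative with respect to the first variable. -/
noncomputable def pd1R (f : ℝ × ℝ → ℝ) (p : ℝ × ℝ) : ℝ := fderiv ℝ f p (1, 0)

/-- Partial derivative with respect to the second variable. -/
noncomputable def pd2R (f : ℝ × ℝ → ℝ) (p : ℝ × ℝ) : ℝ := fderiv ℝ f p (0, 1)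

/-- Divergence of a planar field. -/
noncomputable def divR (u : ℝ × ℝ → ℝ × ℝ) (p : ℝ × ℝ) : ℝ :=
  pd1R (fun q => (u q).1) p + pd2R (fun q => (u q).2) p




open Complex

def HasPd (f : ℝ × ℝ → ℝ) (p : ℝ × ℝ) (d1 d2 : ℝ) : Prop :=
  HasFDerivAt f (d1 • (ContinuousLinearMap.fst ℝ ℝ ℝ) + d2 • (ContinuousLinearMap.snd ℝ ℝ ℝ)) p

namespace HasPd

variable {f g : ℝ × ℝ → ℝ} {p : ℝ × ℝ} {a1 a2 b1 b2 c1 c2 : ℝ}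

lemma fd (h : HasPd f p a1 a2) :
    HasFDerivAt f (a1 • (ContinuousLinearMap.fst ℝ ℝ ℝ) + a2 • (ContinuousLinearMap.snd ℝ ℝ ℝ)) p := h

lemma pd1 (h : HasPd f p a1 a2) : pd1R f p = a1 := by
  rw [pd1R, h.fd.fderiv]; simp

lemma pd2 (h : HasPd f p a1 a2) : pd2R f p = a2 := by
  rw [pd2R, h.fd.fderiv]; simp

lemma diffAt (h : HasPd f p a1 a2) : DifferentiableAt ℝ f p := h.fd.differentiableAt

lemma of_hasFDerivAt {L : ℝ × ℝ →L[ℝ] ℝ} (h : HasFDerivAt f L p)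
    (h1 : L (1, 0) = a1) (h2 : L (0, 1) = a2) : HasPd f p a1 a2 := by
  unfold HasPd
  convert h using 1
  apply ContinuousLinearMap.ext
  intro v
  have hv : v = v.1 • ((1:ℝ), (0:ℝ)) + v.2 • ((0:ℝ), (1:ℝ)) := by
    ext <;> simp
  rw [hv]
  simp only [map_add, map_smul, h1, h2]
  simp [smul_eq_mul]

lemma congr_d (h : HasPd f p a1 a2) (h1 : a1 = b1) (h2 : a2 = b2) : HasPd f p b1 b2 :=
  h1 ▸ h2 ▸ h

lemma add (hf : HasPd f p a1 a2) (hg : HasPd g p b1 b2) :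
    HasPd (fun q => f q + g q) p (a1 + b1) (a2 + b2) :=
  of_hasFDerivAt (hf.fd.add hg.fd) (by simp) (by simp)

lemma sub (hf : HasPd f p a1 a2) (hg : HasPd g p b1 b2) :
    HasPd (fun q => f q - g q) p (a1 - b1) (a2 - b2) :=
  of_hasFDerivAt (hf.fd.sub hg.fd) (by simp) (by simp)

lemma neg (hf : HasPd f p a1 a2) : HasPd (fun q => -f q) p (-a1) (-a2) :=
  of_hasFDerivAt hf.fd.neg (by simp) (by simp)

lemma const_mul (hf : HasPd f p a1 a2) (c : ℝ) :
    HasPd (fun q => c * f q) p (c * a1) (c * a2) :=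
  of_hasFDerivAt (hf.fd.const_mul c) (by simp) (by simp)

lemma mul (hf : HasPd f p a1 a2) (hg : HasPd g p b1 b2) :
    HasPd (fun q => f q * g q) p (f p * b1 + a1 * g p) (f p * b2 + a2 * g p) :=
  of_hasFDerivAt (hf.fd.mul hg.fd) (by simp [mul_comm]) (by simp [mul_comm])

end HasPd

lemma hasPd_const (p : ℝ × ℝ) (c : ℝ) : HasPd (fun _ => c) p 0 0 :=
  HasPd.of_hasFDerivAt (hasFDerivAt_const c p) (by simp) (by simp)

lemma hasPd_x (p : ℝ × ℝ) : HasPd (fun q : ℝ × ℝ => q.1) p 1 0 :=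
  HasPd.of_hasFDerivAt (hasFDerivAt_fst) (by simp) (by simp)

lemma hasPd_y (p : ℝ × ℝ) : HasPd (fun q : ℝ × ℝ => q.2) p 0 1 :=
  HasPd.of_hasFDerivAt (hasFDerivAt_snd) (by simp) (by simp)

lemma HasPd.congr_fun {f g : ℝ × ℝ → ℝ} {p : ℝ × ℝ} {d1 d2 : ℝ} (h : HasPd f p d1 d2)
    (hfg : ∀ q, g q = f q) : HasPd g p d1 d2 := by
  have : g = f := funext hfg
  rw [this]; exact h

lemma hasPd_N (p : ℝ × ℝ) : HasPd (fun q : ℝ × ℝ => q.1 ^ 2 + q.2 ^ 2) p (2 * p.1) (2 * p.2) := by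
  have h := ((hasPd_x p).mul (hasPd_x p)).add ((hasPd_y p).mul (hasPd_y p))
  exact (h.congr_fun (fun q => by ring)).congr_d (by ring) (by ring)

noncomputable def Lzm : ℝ × ℝ →L[ℝ] ℂ :=
  (ContinuousLinearMap.fst ℝ ℝ ℝ).smulRight 1 + (ContinuousLinearMap.snd ℝ ℝ ℝ).smulRight Complex.I

noncomputable def zf (q : ℝ × ℝ) : ℂ := (q.1 : ℂ) + (q.2 : ℂ) * Complex.I

@[simp] lemma zf_re (q : ℝ × ℝ) : (zf q).re = q.1 := by simp [zf]
@[simp] lemma zf_im (q : ℝ × ℝ) : (zf q).im = q.2 := by simp [zf]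

lemma Lzm_apply (v : ℝ × ℝ) : Lzm v = zf v := by
  simp [Lzm, zf, Complex.real_smul]

lemma zf_eq_Lzm : zf = ⇑Lzm := funext fun v => (Lzm_apply v).symm

lemma hasFDerivAt_zf (p : ℝ × ℝ) : HasFDerivAt zf Lzm p := by
  rw [zf_eq_Lzm]; exact Lzm.hasFDerivAt

lemma mem_slitPlane_of_mem {p : ℝ × ℝ} (hp : p ∈ slitSet) : zf p ∈ Complex.slitPlane := by
  simp only [Complex.mem_slitPlane_iff, zf_re, zf_im]
  by_cases h : p.2 = 0
  · exact Or.inl (lt_of_not_ge fun hle => hp ⟨h, hle⟩)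
  · exact Or.inr h

lemma zf_ne_zero {p : ℝ × ℝ} (hp : p ∈ slitSet) : zf p ≠ 0 :=
  Complex.slitPlane_ne_zero (mem_slitPlane_of_mem hp)

noncomputable def RP (t : ℝ) (q : ℝ × ℝ) : ℝ := (zf q ^ (t : ℂ)).re
noncomputable def IP (t : ℝ) (q : ℝ × ℝ) : ℝ := (zf q ^ (t : ℂ)).im

lemma hasFDerivAt_cpow_zf (t : ℝ) {p : ℝ × ℝ} (hp : p ∈ slitSet) :
    HasFDerivAt (fun q => zf q ^ (t : ℂ)) (((t : ℂ) * zf p ^ ((t : ℂ) - 1)) • Lzm) p := by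
  have h := (Complex.hasStrictDerivAt_cpow_const (c := (t : ℂ))
    (mem_slitPlane_of_mem hp)).hasDerivAt
  have h2 := h.comp_hasFDerivAt p (hasFDerivAt_zf p)
  exact h2

lemma cast1 (t : ℝ) : ((t : ℂ) - 1) = ((t - 1 : ℝ) : ℂ) := by push_cast; ring

@[simp] lemma zf_e1 : zf ((1:ℝ), (0:ℝ)) = 1 := by simp [zf]
@[simp] lemma zf_e2 : zf ((0:ℝ), (1:ℝ)) = Complex.I := by simp [zf]

lemma re_ofReal_mul' (t : ℝ) (w : ℂ) : ((t : ℂ) * w).re = t * w.re := by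
  rw [Complex.mul_re]; simp

lemma im_ofReal_mul' (t : ℝ) (w : ℂ) : ((t : ℂ) * w).im = t * w.im := by
  rw [Complex.mul_im]; simp

lemma hasPd_RP (t : ℝ) {p : ℝ × ℝ} (hp : p ∈ slitSet) :
    HasPd (RP t) p (t * RP (t - 1) p) (-(t * IP (t - 1) p)) := by
  have hre := (Complex.reCLM.hasFDerivAt
    (x := zf p ^ (t : ℂ))).comp p (hasFDerivAt_cpow_zf t hp)
  refine HasPd.of_hasFDerivAt (f := RP t) hre ?_ ?_
  · show Complex.reCLM (((t : ℂ) * zf p ^ ((t : ℂ) - 1)) • Lzm ((1:ℝ), (0:ℝ))) = _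
    rw [Lzm_apply, zf_e1, smul_eq_mul, mul_one, cast1]
    simpa [RP] using re_ofReal_mul' t (zf p ^ ((t - 1 : ℝ) : ℂ))
  · show Complex.reCLM (((t : ℂ) * zf p ^ ((t : ℂ) - 1)) • Lzm ((0:ℝ), (1:ℝ))) = _
    rw [Lzm_apply, zf_e2, smul_eq_mul, cast1]
    have : (((t - 1 : ℝ) : ℂ) : ℂ) = ((t - 1 : ℝ) : ℂ) := rfl
    simp only [Complex.reCLM_apply, Complex.mul_re, Complex.I_re, Complex.I_im, mul_zero, mul_one,
      zero_sub]
    rw [im_ofReal_mul']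
    show -(t * IP (t-1) p) = _
    ring

lemma hasPd_IP (t : ℝ) {p : ℝ × ℝ} (hp : p ∈ slitSet) :
    HasPd (IP t) p (t * IP (t - 1) p) (t * RP (t - 1) p) := by
  have him := (Complex.imCLM.hasFDerivAt
    (x := zf p ^ (t : ℂ))).comp p (hasFDerivAt_cpow_zf t hp)
  refine HasPd.of_hasFDerivAt (f := IP t) him ?_ ?_
  · show Complex.imCLM (((t : ℂ) * zf p ^ ((t : ℂ) - 1)) • Lzm ((1:ℝ), (0:ℝ))) = _
    rw [Lzm_apply, zf_e1, smul_eq_mul, mul_one, cast1]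
    simpa [IP] using im_ofReal_mul' t (zf p ^ ((t - 1 : ℝ) : ℂ))
  · show Complex.imCLM (((t : ℂ) * zf p ^ ((t : ℂ) - 1)) • Lzm ((0:ℝ), (1:ℝ))) = _
    rw [Lzm_apply, zf_e2, smul_eq_mul, cast1]
    simp only [Complex.imCLM_apply, Complex.mul_im, Complex.I_re, Complex.I_im, mul_zero, mul_one,
      zero_add]
    rw [re_ofReal_mul']
    show t * RP (t-1) p + 0 = _
    ring

lemma idIm (t : ℝ) {q : ℝ × ℝ} (hq : q ∈ slitSet) :
    q.1 * IP t q + q.2 * RP t q = IP (t + 1) q := by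
  have hz := zf_ne_zero hq
  have h : zf q ^ (((t + 1 : ℝ)) : ℂ) = zf q ^ (t : ℂ) * zf q := by
    have : (((t + 1 : ℝ)) : ℂ) = (t : ℂ) + 1 := by push_cast; ring
    rw [this, Complex.cpow_add _ _ hz, Complex.cpow_one]
  unfold IP RP
  rw [h, Complex.mul_im, zf_re, zf_im]
  ring

lemma idRe (t : ℝ) {q : ℝ × ℝ} (hq : q ∈ slitSet) :
    q.1 * RP t q - q.2 * IP t q = RP (t + 1) q := by
  have hz := zf_ne_zero hq
  have h : zf q ^ (((t + 1 : ℝ)) : ℂ) = zf q ^ (t : ℂ) * zf q := by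
    have : (((t + 1 : ℝ)) : ℂ) = (t : ℂ) + 1 := by push_cast; ring
    rw [this, Complex.cpow_add _ _ hz, Complex.cpow_one]
  unfold IP RP
  rw [h, Complex.mul_re, zf_re, zf_im]
  ring

lemma npos {p : ℝ × ℝ} (hp : p ∈ slitSet) : 0 < p.1 ^ 2 + p.2 ^ 2 := by
  rcases lt_or_eq_of_le (by positivity : (0:ℝ) ≤ p.1 ^ 2 + p.2 ^ 2) with h | h
  · exact h
  · exfalso
    have h1 : p.1 = 0 := by nlinarith [sq_nonneg p.1, sq_nonneg p.2]
    have h2 : p.2 = 0 := by nlinarith [sq_nonneg p.1, sq_nonneg p.2]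
    exact hp ⟨h2, h1.le⟩

lemma abs_zf {q : ℝ × ℝ} : ‖zf q‖ = Real.sqrt (q.1 ^ 2 + q.2 ^ 2) := by
  rw [Complex.norm_def, Complex.normSq_apply, zf_re, zf_im]
  congr 1
  ring

lemma cpow_polar (t : ℝ) {q : ℝ × ℝ} (hq : q ∈ slitSet) :
    zf q ^ (t : ℂ) = ((Real.sqrt (q.1 ^ 2 + q.2 ^ 2) ^ t : ℝ) : ℂ)
      * Complex.exp (((t * Complex.arg (zf q) : ℝ) : ℂ) * Complex.I) := by
  have hz := zf_ne_zero hq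
  have hr : 0 < Real.sqrt (q.1 ^ 2 + q.2 ^ 2) := Real.sqrt_pos.mpr (npos hq)
  rw [Complex.cpow_def_of_ne_zero hz]
  have hlog : Complex.log (zf q) = ((Real.log (Real.sqrt (q.1 ^ 2 + q.2 ^ 2)) : ℝ) : ℂ)
      + ((Complex.arg (zf q) : ℝ) : ℂ) * Complex.I := by
    apply Complex.ext
    · simp [Complex.log_re, abs_zf]
    · simp [Complex.log_im]
  rw [hlog, add_mul, Complex.exp_add]
  congr 1
  · rw [show ((Real.log (Real.sqrt (q.1 ^ 2 + q.2 ^ 2)) : ℝ) : ℂ) * (t : ℂ)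
        = ((Real.log (Real.sqrt (q.1 ^ 2 + q.2 ^ 2)) * t : ℝ) : ℂ) by push_cast; ring,
      ← Complex.ofReal_exp]
    congr 1
    rw [Real.rpow_def_of_pos hr]
  · congr 1
    push_cast
    ring

lemma RP_polar (t : ℝ) {q : ℝ × ℝ} (hq : q ∈ slitSet) :
    RP t q = Real.sqrt (q.1 ^ 2 + q.2 ^ 2) ^ t * Real.cos (t * Complex.arg (zf q)) := by
  unfold RP
  rw [cpow_polar t hq, Complex.mul_re, Complex.ofReal_re, Complex.ofReal_im,
    Complex.exp_ofReal_mul_I_re, Complex.exp_ofReal_mul_I_im]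
  ring

lemma IP_polar (t : ℝ) {q : ℝ × ℝ} (hq : q ∈ slitSet) :
    IP t q = Real.sqrt (q.1 ^ 2 + q.2 ^ 2) ^ t * Real.sin (t * Complex.arg (zf q)) := by
  unfold IP
  rw [cpow_polar t hq, Complex.mul_im, Complex.ofReal_re, Complex.ofReal_im,
    Complex.exp_ofReal_mul_I_re, Complex.exp_ofReal_mul_I_im]
  ring


noncomputable def aaK (k : ℕ) : ℝ := (k : ℝ) / 2
noncomputable def bbK (k : ℕ) : ℝ := aaK k - 2
noncomputable def ccK (κ : ℝ) (k : ℕ) : ℝ := κ + aaK k - (-1 : ℝ) ^ k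
noncomputable def ddK (κ : ℝ) (k : ℕ) : ℝ := aaK k - (-1 : ℝ) ^ k - κ

noncomputable def u1f (κ : ℝ) (k : ℕ) (q : ℝ × ℝ) : ℝ :=
  ccK κ k * IP (aaK k) q - aaK k * ((q.1 ^ 2 + q.2 ^ 2) * IP (bbK k) q)
noncomputable def u2f (κ : ℝ) (k : ℕ) (q : ℝ × ℝ) : ℝ :=
  ddK κ k * RP (aaK k) q - aaK k * ((q.1 ^ 2 + q.2 ^ 2) * RP (bbK k) q)

lemma rpow_split (k : ℕ) {q : ℝ × ℝ} (hq : q ∈ slitSet) :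
    Real.sqrt (q.1 ^ 2 + q.2 ^ 2) ^ (aaK k)
      = (q.1 ^ 2 + q.2 ^ 2) * Real.sqrt (q.1 ^ 2 + q.2 ^ 2) ^ (bbK k) := by
  have hr : 0 < Real.sqrt (q.1 ^ 2 + q.2 ^ 2) := Real.sqrt_pos.mpr (npos hq)
  have h2 : Real.sqrt (q.1 ^ 2 + q.2 ^ 2) ^ (2 : ℝ) = q.1 ^ 2 + q.2 ^ 2 := by
    rw [show (2 : ℝ) = ((2 : ℕ) : ℝ) by norm_num, Real.rpow_natCast,
      Real.sq_sqrt (npos hq).le]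
  rw [show aaK k = bbK k + 2 by unfold bbK; ring, Real.rpow_add hr, h2]
  ring

lemma upsi_fst (κ : ℝ) (k : ℕ) {q : ℝ × ℝ} (hq : q ∈ slitSet) :
    (upsi κ k q).1 = u1f κ k q := by
  unfold upsi psik u1f ccK
  rw [Prod.smul_fst]
  simp only [smul_eq_mul]
  rw [show ((q.1:ℂ) + (q.2:ℂ) * Complex.I) = zf q from rfl]
  rw [show ∀ θ : ℝ, (k : ℝ) * θ / 2 = aaK k * θ from fun θ => by unfold aaK; ring]
  rw [show ((k : ℝ) / 2 - 2) * (zf q).arg = bbK k * (zf q).arg from by unfold bbK aaK; ring]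
  rw [show ((k : ℝ) / 2) = aaK k from rfl]
  rw [IP_polar (aaK k) hq, IP_polar (bbK k) hq, rpow_split k hq]
  ring

lemma upsi_snd (κ : ℝ) (k : ℕ) {q : ℝ × ℝ} (hq : q ∈ slitSet) :
    (upsi κ k q).2 = u2f κ k q := by
  unfold upsi psik u2f ddK
  rw [Prod.smul_snd]
  simp only [smul_eq_mul]
  rw [show ((q.1:ℂ) + (q.2:ℂ) * Complex.I) = zf q from rfl]
  rw [show ∀ θ : ℝ, (k : ℝ) * θ / 2 = aaK k * θ from fun θ => by unfold aaK; ring]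
  rw [show ((k : ℝ) / 2 - 2) * (zf q).arg = bbK k * (zf q).arg from by unfold bbK aaK; ring]
  rw [show ((k : ℝ) / 2) = aaK k from rfl]
  rw [RP_polar (aaK k) hq, RP_polar (bbK k) hq, rpow_split k hq]
  ring

lemma isOpen_slitSet : IsOpen slitSet := by
  have : slitSet = zf ⁻¹' Complex.slitPlane := by
    ext p
    simp only [Set.mem_preimage, Complex.mem_slitPlane_iff, zf_re, zf_im, slitSet,
      Set.mem_setOf_eq]
    constructor
    · intro hp
      by_cases h : p.2 = 0
      · exact Or.inl (lt_of_not_ge fun hle => hp ⟨h, hle⟩)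
      · exact Or.inr h
    · rintro (h | h) ⟨h2, h1⟩
      · exact absurd h1 (not_le.mpr h)
      · exact h h2
  rw [this, zf_eq_Lzm]
  exact Complex.isOpen_slitPlane.preimage Lzm.continuous

lemma pd1R_congr {f g : ℝ × ℝ → ℝ} {p : ℝ × ℝ} (h : ∀ q ∈ slitSet, f q = g q)
    (hp : p ∈ slitSet) : pd1R f p = pd1R g p := by
  unfold pd1R
  rw [Filter.EventuallyEq.fderiv_eq (Filter.eventuallyEq_of_mem (isOpen_slitSet.mem_nhds hp) h)]

lemma pd2R_congr {f g : ℝ × ℝ → ℝ} {p : ℝ × ℝ} (h : ∀ q ∈ slitSet, f q = g q)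
    (hp : p ∈ slitSet) : pd2R f p = pd2R g p := by
  unfold pd2R
  rw [Filter.EventuallyEq.fderiv_eq (Filter.eventuallyEq_of_mem (isOpen_slitSet.mem_nhds hp) h)]

noncomputable def D1u1 (κ : ℝ) (k : ℕ) (q : ℝ × ℝ) : ℝ :=
  ccK κ k * aaK k * IP (aaK k - 1) q
    - aaK k * (2 * q.1 * IP (bbK k) q + bbK k * ((q.1 ^ 2 + q.2 ^ 2) * IP (bbK k - 1) q))
noncomputable def D2u1 (κ : ℝ) (k : ℕ) (q : ℝ × ℝ) : ℝ :=
  ccK κ k * aaK k * RP (aaK k - 1) q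
    - aaK k * (2 * q.2 * IP (bbK k) q + bbK k * ((q.1 ^ 2 + q.2 ^ 2) * RP (bbK k - 1) q))
noncomputable def D1u2 (κ : ℝ) (k : ℕ) (q : ℝ × ℝ) : ℝ :=
  ddK κ k * aaK k * RP (aaK k - 1) q
    - aaK k * (2 * q.1 * RP (bbK k) q + bbK k * ((q.1 ^ 2 + q.2 ^ 2) * RP (bbK k - 1) q))
noncomputable def D2u2 (κ : ℝ) (k : ℕ) (q : ℝ × ℝ) : ℝ :=
  -(ddK κ k * aaK k * IP (aaK k - 1) q)
    - aaK k * (2 * q.2 * RP (bbK k) q - bbK k * ((q.1 ^ 2 + q.2 ^ 2) * IP (bbK k - 1) q))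

lemma hasPd_u1f (κ : ℝ) (k : ℕ) {q : ℝ × ℝ} (hq : q ∈ slitSet) :
    HasPd (u1f κ k) q (D1u1 κ k q) (D2u1 κ k q) := by
  unfold u1f D1u1 D2u1
  exact (((hasPd_IP (aaK k) hq).const_mul (ccK κ k)).sub
    (((hasPd_N q).mul (hasPd_IP (bbK k) hq)).const_mul (aaK k))).congr_d (by ring) (by ring)

lemma hasPd_u2f (κ : ℝ) (k : ℕ) {q : ℝ × ℝ} (hq : q ∈ slitSet) :
    HasPd (u2f κ k) q (D1u2 κ k q) (D2u2 κ k q) := by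
  unfold u2f D1u2 D2u2
  exact (((hasPd_RP (aaK k) hq).const_mul (ddK κ k)).sub
    (((hasPd_N q).mul (hasPd_RP (bbK k) hq)).const_mul (aaK k))).congr_d (by ring) (by ring)

lemma hab (k : ℕ) : aaK k - 1 - 1 = bbK k := by unfold bbK; ring

lemma lap1 (κ : ℝ) (k : ℕ) {p : ℝ × ℝ} (hp : p ∈ slitSet) :
    pd1R (D1u1 κ k) p + pd2R (D2u1 κ k) p = -(4 * aaK k * (aaK k - 1)) * IP (bbK k) p := by
  have H1 := (((hasPd_IP (aaK k - 1) hp).const_mul (ccK κ k * aaK k)).sub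
    (((((hasPd_x p).const_mul 2).mul (hasPd_IP (bbK k) hp)).add
      (((hasPd_N p).mul (hasPd_IP (bbK k - 1) hp)).const_mul (bbK k))).const_mul (aaK k)))
  have H2 := (((hasPd_RP (aaK k - 1) hp).const_mul (ccK κ k * aaK k)).sub
    (((((hasPd_y p).const_mul 2).mul (hasPd_IP (bbK k) hp)).add
      (((hasPd_N p).mul (hasPd_RP (bbK k - 1) hp)).const_mul (bbK k))).const_mul (aaK k)))
  unfold D1u1 D2u1
  rw [H1.pd1, H2.pd2]
  have hid := idIm (bbK k - 1) hp
  rw [show bbK k - 1 + 1 = bbK k by ring] at hid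
  rw [hab k]
  have hbb : bbK k = aaK k - 2 := rfl
  linear_combination (-(4 * aaK k * bbK k)) * hid + (-(4 * aaK k * IP (bbK k) p)) * hbb

lemma lap2 (κ : ℝ) (k : ℕ) {p : ℝ × ℝ} (hp : p ∈ slitSet) :
    pd1R (D1u2 κ k) p + pd2R (D2u2 κ k) p = -(4 * aaK k * (aaK k - 1)) * RP (bbK k) p := by
  have H1 := (((hasPd_RP (aaK k - 1) hp).const_mul (ddK κ k * aaK k)).sub
    (((((hasPd_x p).const_mul 2).mul (hasPd_RP (bbK k) hp)).add
      (((hasPd_N p).mul (hasPd_RP (bbK k - 1) hp)).const_mul (bbK k))).const_mul (aaK k)))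
  have H2 := ((((hasPd_IP (aaK k - 1) hp).const_mul (ddK κ k * aaK k)).neg).sub
    (((((hasPd_y p).const_mul 2).mul (hasPd_RP (bbK k) hp)).sub
      (((hasPd_N p).mul (hasPd_IP (bbK k - 1) hp)).const_mul (bbK k))).const_mul (aaK k)))
  unfold D1u2 D2u2
  rw [H1.pd1, H2.pd2]
  have hid := idRe (bbK k - 1) hp
  rw [show bbK k - 1 + 1 = bbK k by ring] at hid
  rw [hab k]
  have hbb : bbK k = aaK k - 2 := rfl
  linear_combination (-(4 * aaK k * bbK k)) * hid + (-(4 * aaK k * RP (bbK k) p)) * hbb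


noncomputable def eK (κ : ℝ) (k : ℕ) (q : ℝ × ℝ) : ℝ :=
  2 * aaK k * (κ - 1) * IP (aaK k - 1) q

lemma pd1_upsi1 (κ : ℝ) (k : ℕ) : ∀ q ∈ slitSet,
    pd1R (fun r => (upsi κ k r).1) q = D1u1 κ k q := fun q hq => by
  rw [pd1R_congr (fun r hr => upsi_fst κ k hr) hq, (hasPd_u1f κ k hq).pd1]

lemma pd2_upsi1 (κ : ℝ) (k : ℕ) : ∀ q ∈ slitSet,
    pd2R (fun r => (upsi κ k r).1) q = D2u1 κ k q := fun q hq => by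
  rw [pd2R_congr (fun r hr => upsi_fst κ k hr) hq, (hasPd_u1f κ k hq).pd2]

lemma pd1_upsi2 (κ : ℝ) (k : ℕ) : ∀ q ∈ slitSet,
    pd1R (fun r => (upsi κ k r).2) q = D1u2 κ k q := fun q hq => by
  rw [pd1R_congr (fun r hr => upsi_snd κ k hr) hq, (hasPd_u2f κ k hq).pd1]

lemma pd2_upsi2 (κ : ℝ) (k : ℕ) : ∀ q ∈ slitSet,
    pd2R (fun r => (upsi κ k r).2) q = D2u2 κ k q := fun q hq => by
  rw [pd2R_congr (fun r hr => upsi_snd κ k hr) hq, (hasPd_u2f κ k hq).pd2]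

lemma div_eq (κ : ℝ) (k : ℕ) : ∀ q ∈ slitSet, divR (upsi κ k) q = eK κ k q := fun q hq => by
  unfold divR eK
  rw [pd1_upsi1 κ k q hq, pd2_upsi2 κ k q hq]
  unfold D1u1 D2u2
  have hid := idIm (bbK k) hq
  rw [show bbK k + 1 = aaK k - 1 from by unfold bbK; ring] at hid
  have hcd : ccK κ k - ddK κ k = 2 * κ := by unfold ccK ddK; ring
  linear_combination (-2 * aaK k) * hid + (aaK k * IP (aaK k - 1) q) * hcd

lemma pd_div1 (κ : ℝ) (k : ℕ) {p : ℝ × ℝ} (hp : p ∈ slitSet) :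
    pd1R (divR (upsi κ k)) p = 2 * aaK k * (κ - 1) * (aaK k - 1) * IP (bbK k) p := by
  rw [pd1R_congr (div_eq κ k) hp]
  have H := (hasPd_IP (aaK k - 1) hp).const_mul (2 * aaK k * (κ - 1))
  unfold eK
  rw [H.pd1, hab k]
  ring

lemma pd_div2 (κ : ℝ) (k : ℕ) {p : ℝ × ℝ} (hp : p ∈ slitSet) :
    pd2R (divR (upsi κ k)) p = 2 * aaK k * (κ - 1) * (aaK k - 1) * RP (bbK k) p := by
  rw [pd2R_congr (div_eq κ k) hp]
  have H := (hasPd_IP (aaK k - 1) hp).const_mul (2 * aaK k * (κ - 1))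
  unfold eK
  rw [H.pd2, hab k]
  ring

lemma lap_upsi1 (κ : ℝ) (k : ℕ) {p : ℝ × ℝ} (hp : p ∈ slitSet) :
    pd1R (pd1R (fun q => (upsi κ k q).1)) p + pd2R (pd2R (fun q => (upsi κ k q).1)) p
      = -(4 * aaK k * (aaK k - 1)) * IP (bbK k) p := by
  rw [pd1R_congr (pd1_upsi1 κ k) hp, pd2R_congr (pd2_upsi1 κ k) hp]
  exact lap1 κ k hp

lemma lap_upsi2 (κ : ℝ) (k : ℕ) {p : ℝ × ℝ} (hp : p ∈ slitSet) :
    pd1R (pd1R (fun q => (upsi κ k q).2)) p + pd2R (pd2R (fun q => (upsi κ k q).2)) p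
      = -(4 * aaK k * (aaK k - 1)) * RP (bbK k) p := by
  rw [pd1R_congr (pd1_upsi2 κ k) hp, pd2R_congr (pd2_upsi2 κ k) hp]
  exact lap2 κ k hp

lemma contDiffOn_cpow_zf (t : ℝ) :
    ContDiffOn ℝ (⊤ : ℕ∞) (fun q => zf q ^ (t : ℂ)) slitSet := by
  have h1 : DifferentiableOn ℂ (fun w : ℂ => w ^ (t : ℂ)) Complex.slitPlane := fun x hx =>
    ((Complex.hasStrictDerivAt_cpow_const hx).hasDerivAt.differentiableAt).differentiableWithinAt
  have h2 : ContDiffOn ℂ (⊤ : ℕ∞) (fun w : ℂ => w ^ (t : ℂ)) Complex.slitPlane :=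
    h1.contDiffOn Complex.isOpen_slitPlane
  have h3 : ContDiffOn ℝ (⊤ : ℕ∞) (fun w : ℂ => w ^ (t : ℂ)) Complex.slitPlane :=
    h2.restrict_scalars ℝ
  have h4 : ContDiff ℝ (⊤ : ℕ∞) zf := by
    rw [zf_eq_Lzm]; exact Lzm.contDiff
  exact h3.comp h4.contDiffOn (fun q hq => mem_slitPlane_of_mem hq)

lemma contDiffOn_RP (t : ℝ) : ContDiffOn ℝ (⊤ : ℕ∞) (RP t) slitSet :=
  Complex.reCLM.contDiff.comp_contDiffOn (contDiffOn_cpow_zf t)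

lemma contDiffOn_IP (t : ℝ) : ContDiffOn ℝ (⊤ : ℕ∞) (IP t) slitSet :=
  Complex.imCLM.contDiff.comp_contDiffOn (contDiffOn_cpow_zf t)

lemma contDiffOn_upsi (κ : ℝ) (k : ℕ) : ContDiffOn ℝ (⊤ : ℕ∞) (upsi κ k) slitSet := by
  have hN : ContDiff ℝ (⊤ : ℕ∞) (fun q : ℝ × ℝ => q.1 ^ 2 + q.2 ^ 2) :=
    (contDiff_fst.pow 2).add (contDiff_snd.pow 2)
  have h1 : ContDiffOn ℝ (⊤ : ℕ∞) (u1f κ k) slitSet := by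
    unfold u1f
    exact (contDiffOn_const.mul (contDiffOn_IP (aaK k))).sub
      (contDiffOn_const.mul (hN.contDiffOn.mul (contDiffOn_IP (bbK k))))
  have h2 : ContDiffOn ℝ (⊤ : ℕ∞) (u2f κ k) slitSet := by
    unfold u2f
    exact (contDiffOn_const.mul (contDiffOn_RP (aaK k))).sub
      (contDiffOn_const.mul (hN.contDiffOn.mul (contDiffOn_RP (bbK k))))
  exact (h1.prodMk h2).congr (fun q hq => by
    exact Prod.ext (upsi_fst κ k hq) (upsi_snd κ k hq))


theorem stmt12 (μ lam : ℝ) (hμ : 0 < μ) (hlm : 0 < lam + μ) (k : ℕ) :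
    ContDiffOn ℝ (⊤ : ℕ∞) (upsi ((lam + 3 * μ) / (lam + μ)) k) slitSet ∧
    ∀ p ∈ slitSet,
      (μ * (pd1R (pd1R (fun q => (upsi ((lam + 3 * μ) / (lam + μ)) k q).1)) p
            + pd2R (pd2R (fun q => (upsi ((lam + 3 * μ) / (lam + μ)) k q).1)) p)
        + (lam + μ) * pd1R (divR (upsi ((lam + 3 * μ) / (lam + μ)) k)) p = 0) ∧
      (μ * (pd1R (pd1R (fun q => (upsi ((lam + 3 * μ) / (lam + μ)) k q).2)) p
            + pd2R (pd2R (fun q => (upsi ((lam + 3 * μ) / (lam + μ)) k q).2)) p)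
        + (lam + μ) * pd2R (divR (upsi ((lam + 3 * μ) / (lam + μ)) k)) p = 0) := by
  set κ : ℝ := (lam + 3 * μ) / (lam + μ) with hκ
  have hκc : (lam + μ) * (κ - 1) = 2 * μ := by
    rw [hκ]
    field_simp
    ring
  refine ⟨contDiffOn_upsi κ k, fun p hp => ⟨?_, ?_⟩⟩
  · rw [lap_upsi1 κ k hp, pd_div1 κ k hp]
    linear_combination (2 * aaK k * (aaK k - 1) * IP (bbK k) p) * hκc
  · rw [lap_upsi2 κ k hp, pd_div2 κ k hp]
    linear_combination (2 * aaK k * (aaK k - 1) * RP (bbK k) p) * hκc
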